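/- Let I and O be disjoint nonempty finite index sets with |I| = m_in and |O| = m_out, and let (B_e)_{e ∈ I ∪ O} be independent Bernoulli random variables with means (π_e). Let p̄_in = (1/m_in) ∑_{e∈I} π_e, p̄_out = (1/m_out) ∑_{e∈O} π_e, p̂_in = (1/m_in) ∑_{e∈I} B_e, and p̂_out = (1/m_out) ∑_{e∈O} B_e. If 0 ≤ k < Δ where Δ = p̄_in − p̄_out > 0, then P( p̂_in − p̂_out ≤ k ) ≤ 2 exp( −m_in (Δ − k)² / 2 ) + 2 exp( −m_out (Δ − k)² / 2 ). -/

import Mathlib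

open Finset

section helpers
lemma bern_mgf (p : ℝ) (hp0 : 0 ≤ p) (hp1 : p ≤ 1) (l : ℝ) :
    p * Real.exp (l * (1 - p)) + (1 - p) * Real.exp (l * (0 - p)) ≤ Real.exp (l ^ 2 / 8) := by
  have hq : 0 ≤ 1 - p := by linarith
  have φpos : ∀ x : ℝ, 0 < 1 - p + p * Real.exp x := by
    intro x
    rcases hp0.eq_or_lt with h | h
    · simp [← h]
    · have := Real.exp_pos x; nlinarith
  set h : ℝ → ℝ := fun x => x ^ 2 / 8 + x * p - Real.log (1 - p + p * Real.exp x) with hh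
  set D : ℝ → ℝ := fun x => x / 4 + p - p * Real.exp x / (1 - p + p * Real.exp x) with hD
  have hφ : ∀ x : ℝ, HasDerivAt (fun x => 1 - p + p * Real.exp x) (p * Real.exp x) x := by
    intro x
    exact ((Real.hasDerivAt_exp x).const_mul p).const_add (1 - p)
  have hd : ∀ x, HasDerivAt h (D x) x := by
    intro x
    have h2 : HasDerivAt (fun x => Real.log (1 - p + p * Real.exp x))
        (p * Real.exp x / (1 - p + p * Real.exp x)) x := (hφ x).log (φpos x).ne'
    have h3 : HasDerivAt (fun x : ℝ => x ^ 2 / 8 + x * p) (x / 4 + p) x := by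
      have := ((hasDerivAt_pow 2 x).div_const 8).add ((hasDerivAt_id x).mul_const p)
      exact this.congr_deriv (by ring)
    exact h3.sub h2
  have hDd : ∀ x, HasDerivAt D
      (1 / 4 - (p * Real.exp x * (1 - p + p * Real.exp x) -
        p * Real.exp x * (p * Real.exp x)) / (1 - p + p * Real.exp x) ^ 2) x := by
    intro x
    have h1 : HasDerivAt (fun x : ℝ => x / 4 + p) (1 / 4) x := by
      simpa using ((hasDerivAt_id x).div_const 4).add_const p
    have h2 := ((Real.hasDerivAt_exp x).const_mul p).div (hφ x) (φpos x).ne'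
    exact h1.sub h2
  have Dmono : Monotone D := by
    apply monotone_of_hasDerivAt_nonneg hDd
    intro x
    have hx := φpos x
    have he := Real.exp_pos x
    have key : (p * Real.exp x * (1 - p + p * Real.exp x) -
        p * Real.exp x * (p * Real.exp x)) / (1 - p + p * Real.exp x) ^ 2 ≤ 1 / 4 := by
      rw [div_le_iff₀ (by positivity)]
      nlinarith [sq_nonneg ((1 - p) - p * Real.exp x)]
    simp only [Pi.zero_apply]
    linarith
  have D0 : D 0 = 0 := by
    simp [hD, Real.exp_zero]
  have h0 : h 0 = 0 := by
    norm_num [hh, Real.exp_zero]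
  have hcont : Continuous h := by
    have : Differentiable ℝ h := fun x => (hd x).differentiableAt
    exact this.continuous
  have hnn : 0 ≤ h l := by
    rcases le_total 0 l with hl | hl
    · have hmono : MonotoneOn h (Set.Ici 0) := by
        apply monotoneOn_of_hasDerivWithinAt_nonneg (convex_Ici 0) hcont.continuousOn
          (fun x _ => (hd x).hasDerivWithinAt)
        intro x hx
        rw [interior_Ici] at hx
        have : D 0 ≤ D x := Dmono hx.le
        linarith [D0 ▸ this]
      have := hmono Set.self_mem_Ici hl hl
      linarith [h0 ▸ this]
    · have hmono : AntitoneOn h (Set.Iic 0) := by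
        apply antitoneOn_of_hasDerivWithinAt_nonpos (convex_Iic 0) hcont.continuousOn
          (fun x _ => (hd x).hasDerivWithinAt)
        intro x hx
        rw [interior_Iic] at hx
        have : D x ≤ D 0 := Dmono hx.le
        linarith [D0 ▸ this]
      have := hmono hl Set.self_mem_Iic hl
      linarith [h0 ▸ this]
  -- conclude
  have hlog : Real.log (1 - p + p * Real.exp l) ≤ l ^ 2 / 8 + l * p := by
    have : h l = l ^ 2 / 8 + l * p - Real.log (1 - p + p * Real.exp l) := rfl
    linarith [this ▸ hnn]
  have hφle : 1 - p + p * Real.exp l ≤ Real.exp (l ^ 2 / 8 + l * p) :=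
    (Real.log_le_iff_le_exp (φpos l)).1 hlog
  have heq : p * Real.exp (l * (1 - p)) + (1 - p) * Real.exp (l * (0 - p)) =
      Real.exp (-(l * p)) * (1 - p + p * Real.exp l) := by
    rw [show l * (1 - p) = l + -(l * p) by ring, show l * (0 - p) = -(l * p) by ring,
      Real.exp_add]
    ring
  rw [heq]
  calc Real.exp (-(l * p)) * (1 - p + p * Real.exp l)
      ≤ Real.exp (-(l * p)) * Real.exp (l ^ 2 / 8 + l * p) := by
        exact mul_le_mul_of_nonneg_left hφle (Real.exp_pos _).le
    _ = Real.exp (l ^ 2 / 8) := by rw [← Real.exp_add]; ring_nf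
open Finset

open Classical in
lemma chernoff_tail {ι : Type*} [Fintype ι] [DecidableEq ι]
    (π : ι → ℝ) (hπ : ∀ e, 0 ≤ π e ∧ π e ≤ 1)
    (S : Finset ι) (s : ℝ) (hs : s = 1 ∨ s = -1) (t : ℝ) (ht : 0 ≤ t)
    (mgf : ∀ (p : ℝ), 0 ≤ p → p ≤ 1 → ∀ l : ℝ,
      p * Real.exp (l * (1 - p)) + (1 - p) * Real.exp (l * (0 - p)) ≤ Real.exp (l ^ 2 / 8)) :
    ∑ f ∈ Finset.univ.filter (fun f : ι → Bool =>
        (S.card : ℝ) * t ≤ s * ((∑ e ∈ S, (if f e then (1:ℝ) else 0)) - ∑ e ∈ S, π e)),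
      ∏ e : ι, (if f e then π e else 1 - π e)
      ≤ Real.exp (-2 * S.card * t ^ 2) := by
  set l : ℝ := 4 * t with hl
  have hl0 : 0 ≤ l := by positivity
  set w : (ι → Bool) → ℝ := fun f => ∏ e : ι, (if f e then π e else 1 - π e) with hw
  have hwnn : ∀ f, 0 ≤ w f := by
    intro f
    apply Finset.prod_nonneg
    intro e _
    rcases (hπ e) with ⟨h0, h1⟩
    split <;> linarith
  set X : (ι → Bool) → ℝ := fun f => ∑ e ∈ S, (if f e then (1:ℝ) else 0) with hX
  set M : ℝ := ∑ e ∈ S, π e with hM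
  set g : ι → Bool → ℝ := fun e b => (if b then π e else 1 - π e) *
      (if e ∈ S then Real.exp (l * s * ((if b then (1:ℝ) else 0) - π e)) else 1) with hg
  have key : ∀ f : ι → Bool, ∏ e : ι, g e (f e) = w f * Real.exp (l * s * (X f - M)) := by
    intro f
    rw [hg]
    simp only
    rw [Finset.prod_mul_distrib]
    congr 1
    rw [Finset.prod_ite_mem, Finset.univ_inter, ← Real.exp_sum]
    congr 1
    simp only [hX, hM]
    rw [← Finset.sum_sub_distrib, Finset.mul_sum]
  have factor : ∑ f : ι → Bool, ∏ e : ι, g e (f e) = ∏ e : ι, (g e true + g e false) := by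
    have h := Finset.prod_univ_sum (fun _ : ι => (Finset.univ : Finset Bool)) g
    simp only [Fintype.piFinset_univ, Fintype.sum_bool] at h
    exact h.symm
  have hs2 : s ^ 2 = 1 := by rcases hs with rfl | rfl <;> norm_num
  have prodbound : ∏ e : ι, (g e true + g e false) ≤ Real.exp (S.card * (l ^ 2 / 8)) := by
    have hoff : ∀ e ∈ Finset.univ, e ∉ S → g e true + g e false = 1 := by
      intro e _ he
      simp [hg, he]
    rw [← Finset.prod_subset (Finset.subset_univ S) hoff]
    calc ∏ e ∈ S, (g e true + g e false)
        ≤ ∏ e ∈ S, Real.exp (l ^ 2 / 8) := by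
          apply Finset.prod_le_prod
          · intro e _
            rcases hπ e with ⟨h0, h1⟩
            have := (Real.exp_pos (l * s * ((1:ℝ) - π e))).le
            have := (Real.exp_pos (l * s * ((0:ℝ) - π e))).le
            simp only [hg]
            simp only [if_true, Bool.false_eq_true, if_false]
            split <;> nlinarith
          · intro e heS
            rcases hπ e with ⟨h0, h1⟩
            have := mgf (π e) h0 h1 (l * s)
            simp only [hg, if_pos heS, if_true, Bool.false_eq_true, if_false]
            calc π e * Real.exp (l * s * (1 - π e)) + (1 - π e) * Real.exp (l * s * (0 - π e))
                ≤ Real.exp ((l * s) ^ 2 / 8) := this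
              _ = Real.exp (l ^ 2 / 8) := by rw [mul_pow, hs2, mul_one]
      _ = Real.exp (S.card * (l ^ 2 / 8)) := by
          rw [Finset.prod_const, ← Real.exp_nat_mul]
  calc ∑ f ∈ Finset.univ.filter (fun f : ι → Bool => (S.card : ℝ) * t ≤ s * (X f - M)), w f
      ≤ ∑ f ∈ Finset.univ.filter (fun f : ι → Bool => (S.card : ℝ) * t ≤ s * (X f - M)),
          w f * Real.exp (l * s * (X f - M) - l * (S.card * t)) := by
        apply Finset.sum_le_sum
        intro f hf
        rw [Finset.mem_filter] at hf
        apply le_mul_of_one_le_right (hwnn f)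
        apply Real.one_le_exp
        have : l * s * (X f - M) - l * (S.card * t) = l * (s * (X f - M) - S.card * t) := by ring
        rw [this]
        exact mul_nonneg hl0 (by linarith [hf.2])
    _ ≤ ∑ f : ι → Bool, w f * Real.exp (l * s * (X f - M) - l * (S.card * t)) := by
        apply Finset.sum_le_sum_of_subset_of_nonneg (Finset.filter_subset _ _)
        intro f _ _
        exact mul_nonneg (hwnn f) (Real.exp_pos _).le
    _ = (∑ f : ι → Bool, w f * Real.exp (l * s * (X f - M))) * Real.exp (-(l * (S.card * t))) := by
        have he : ∀ f : ι → Bool, w f * Real.exp (l * s * (X f - M) - l * (S.card * t)) =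
            w f * Real.exp (l * s * (X f - M)) * Real.exp (-(l * (S.card * t))) := by
          intro f
          rw [sub_eq_add_neg, Real.exp_add]
          ring
        rw [Finset.sum_congr rfl fun f _ => he f, ← Finset.sum_mul]
    _ = (∏ e : ι, (g e true + g e false)) * Real.exp (-(l * (S.card * t))) := by
        rw [← factor]
        congr 1
        exact Finset.sum_congr rfl fun f _ => (key f).symm
    _ ≤ Real.exp (S.card * (l ^ 2 / 8)) * Real.exp (-(l * (S.card * t))) :=
        mul_le_mul_of_nonneg_right prodbound (Real.exp_pos _).le
    _ = Real.exp (-2 * S.card * t ^ 2) := by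
        rw [← Real.exp_add]
        congr 1
        rw [hl]
        ring

end helpers

open Classical in
/-- Let `I` and `O` be disjoint nonempty finite sets of indices of
independent Bernoulli variables `B_e` with means `π_e`, and let
`p̂_in, p̂_out, p̄_in, p̄_out` be the corresponding empirical and population means. If
`0 ≤ k < Δ := p̄_in − p̄_out`, then
`P(p̂_in − p̂_out ≤ k) ≤ 2·exp(−|I|(Δ−k)²/2) + 2·exp(−|O|(Δ−k)²/2)`, where the
probability is the product Bernoulli measure on configurations `f : ι → Bool`. -/
theorem power_hoeffding_bound {ι : Type*} [Fintype ι] [DecidableEq ι]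
    (I O : Finset ι) (hdisj : Disjoint I O) (hI : I.Nonempty) (hO : O.Nonempty)
    (π : ι → ℝ) (hπ : ∀ e, 0 ≤ π e ∧ π e ≤ 1)
    (k Δ : ℝ) (hk : 0 ≤ k)
    (hΔ : Δ = (∑ e ∈ I, π e) / I.card - (∑ e ∈ O, π e) / O.card)
    (hΔpos : 0 < Δ) (hkΔ : k < Δ) :
    ∑ f ∈ Finset.univ.filter (fun f : ι → Bool =>
        (∑ e ∈ I, (if f e then (1 : ℝ) else 0)) / I.card -
          (∑ e ∈ O, (if f e then (1 : ℝ) else 0)) / O.card ≤ k),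
      ∏ e : ι, (if f e then π e else 1 - π e) ≤
      2 * Real.exp (-(I.card : ℝ) * (Δ - k) ^ 2 / 2) +
        2 * Real.exp (-(O.card : ℝ) * (Δ - k) ^ 2 / 2) := by
  set t : ℝ := (Δ - k) / 2 with htdef
  have ht : 0 ≤ t := by rw [htdef]; linarith
  have mI : (0:ℝ) < I.card := by exact_mod_cast Finset.card_pos.2 hI
  have mO : (0:ℝ) < O.card := by exact_mod_cast Finset.card_pos.2 hO
  set w : (ι → Bool) → ℝ := fun f => ∏ e : ι, (if f e then π e else 1 - π e) with hw
  have hwnn : ∀ f, 0 ≤ w f := by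
    intro f
    apply Finset.prod_nonneg
    intro e _
    rcases (hπ e) with ⟨h0, h1⟩
    split <;> linarith
  set A1 : Finset (ι → Bool) := Finset.univ.filter (fun f : ι → Bool =>
      (I.card : ℝ) * t ≤ (-1 : ℝ) * ((∑ e ∈ I, (if f e then (1:ℝ) else 0)) - ∑ e ∈ I, π e))
    with hA1
  set A2 : Finset (ι → Bool) := Finset.univ.filter (fun f : ι → Bool =>
      (O.card : ℝ) * t ≤ (1 : ℝ) * ((∑ e ∈ O, (if f e then (1:ℝ) else 0)) - ∑ e ∈ O, π e))
    with hA2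
  have hsub : Finset.univ.filter (fun f : ι → Bool =>
        (∑ e ∈ I, (if f e then (1 : ℝ) else 0)) / I.card -
          (∑ e ∈ O, (if f e then (1 : ℝ) else 0)) / O.card ≤ k) ⊆ A1 ∪ A2 := by
    intro f hf
    rw [Finset.mem_filter] at hf
    rw [Finset.mem_union]
    by_contra hc
    push_neg at hc
    obtain ⟨hc1, hc2⟩ := hc
    rw [hA1, Finset.mem_filter] at hc1
    rw [hA2, Finset.mem_filter] at hc2
    push_neg at hc1 hc2
    have hc1' := hc1 (Finset.mem_univ f)
    have hc2' := hc2 (Finset.mem_univ f)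
    have e1 : (∑ e ∈ I, π e) / (I.card:ℝ) - (∑ e ∈ I, (if f e then (1:ℝ) else 0)) / I.card
        < t := by
      rw [← sub_div, div_lt_iff₀ mI]
      nlinarith
    have e2 : (∑ e ∈ O, (if f e then (1:ℝ) else 0)) / (O.card:ℝ) - (∑ e ∈ O, π e) / O.card
        < t := by
      rw [← sub_div, div_lt_iff₀ mO]
      nlinarith
    have := hf.2
    rw [htdef] at e1 e2
    linarith
  have hunion := Finset.sum_union_inter (s₁ := A1) (s₂ := A2) (f := w)
  have hint : 0 ≤ ∑ f ∈ A1 ∩ A2, w f := Finset.sum_nonneg fun f _ => hwnn f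
  have hstep : ∑ f ∈ Finset.univ.filter (fun f : ι → Bool =>
        (∑ e ∈ I, (if f e then (1 : ℝ) else 0)) / I.card -
          (∑ e ∈ O, (if f e then (1 : ℝ) else 0)) / O.card ≤ k), w f
      ≤ ∑ f ∈ A1 ∪ A2, w f :=
    Finset.sum_le_sum_of_subset_of_nonneg hsub fun f _ _ => hwnn f
  have t1 := chernoff_tail π hπ I (-1) (Or.inr rfl) t ht bern_mgf
  have t2 := chernoff_tail π hπ O 1 (Or.inl rfl) t ht bern_mgf
  have eI : Real.exp (-2 * (I.card:ℝ) * t ^ 2) = Real.exp (-(I.card : ℝ) * (Δ - k) ^ 2 / 2) := by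
    congr 1
    rw [htdef]
    ring
  have eO : Real.exp (-2 * (O.card:ℝ) * t ^ 2) = Real.exp (-(O.card : ℝ) * (Δ - k) ^ 2 / 2) := by
    congr 1
    rw [htdef]
    ring
  have p1 := Real.exp_pos (-(I.card : ℝ) * (Δ - k) ^ 2 / 2)
  have p2 := Real.exp_pos (-(O.card : ℝ) * (Δ - k) ^ 2 / 2)
  linarith
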